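/- For all natural numbers k ≥ 2 and real numbers R > 0, 0 ≤ x < R, ∫_{-1}^{1} (1-s²)^{(2k-3)/2} / (R² + x² + 2Rxs)^{k-1} ds = (√π · Γ(k-1/2)/Γ(k)) · R^{-2(k-1)}. -/

import Mathlib

open Real intervalIntegral
open MeasureTheory Set Metric Filter Topology

namespace Stmt3Aux

lemma sin_sq_int (p : ℕ) :
    (∫ θ in (0:ℝ)..π, Real.sin θ ^ (2*p)) =
      Real.sqrt π * Real.Gamma ((p:ℝ) + 1/2) / Real.Gamma ((p:ℝ) + 1) := by
  induction p with
  | zero =>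
      have : Real.sqrt π * Real.sqrt π = π := Real.mul_self_sqrt Real.pi_pos.le
      simp only [Nat.cast_zero, zero_add, mul_zero, pow_zero, integral_one, Real.Gamma_one, div_one, sub_zero, smul_eq_mul, mul_one]
      rw [show (1:ℝ)/2 = 2⁻¹ by norm_num] at *
      rw [show Real.Gamma 2⁻¹ = Real.sqrt π by rw [← Real.Gamma_one_half_eq]; norm_num, this]
  | succ n ih =>
      have he : 2*(n+1) = 2*n + 2 := by ring
      rw [he, integral_sin_pow, ih]
      have h0 : Real.sin 0 = 0 := Real.sin_zero
      have hπ : Real.sin π = 0 := Real.sin_pi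
      rw [h0, hπ]
      have hG1 : Real.Gamma ((n:ℝ) + 1 + 1/2) = ((n:ℝ)+1/2) * Real.Gamma ((n:ℝ)+1/2) := by
        rw [show (n:ℝ) + 1 + 1/2 = ((n:ℝ)+1/2) + 1 by ring, Real.Gamma_add_one]
        positivity
      have hG2 : Real.Gamma ((n:ℝ) + 1 + 1) = ((n:ℝ)+1) * Real.Gamma ((n:ℝ)+1) := by
        rw [Real.Gamma_add_one]; positivity
      have hΓpos : 0 < Real.Gamma ((n:ℝ)+1) := Real.Gamma_pos_of_pos (by positivity)
      push_cast
      rw [hG1, hG2]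
      rw [zero_pow (by omega : 2*n+1 ≠ 0)]
      field_simp
      ring

noncomputable def DD (R x θ : ℝ) : ℝ := R^2 + x^2 + 2*R*x*Real.cos θ

noncomputable def FF (R : ℝ) (p : ℕ) (x θ : ℝ) : ℝ :=
  Real.sin θ^(2*p+2) / DD R x θ^(p+1)

noncomputable def FF' (R : ℝ) (p : ℕ) (x θ : ℝ) : ℝ :=
  -((p:ℝ)+1) * (2*x+2*R*Real.cos θ) * Real.sin θ^(2*p+2) / DD R x θ^(p+2)

noncomputable def hh (R : ℝ) (p : ℕ) (x θ : ℝ) : ℝ := x^(2*p+3) * FF' R p x θ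

noncomputable def Φf (R : ℝ) (p : ℕ) (x θ : ℝ) : ℝ :=
  -2*((p:ℝ)+1)*R*x^(2*p+2)*Real.sin θ^(2*p+3) / DD R x θ^(p+2)

noncomputable def ψf (R : ℝ) (p : ℕ) (x θ : ℝ) : ℝ :=
  -2*((p:ℝ)+1)*(2*(p:ℝ)+3)*R*x^(2*p+2)*Real.sin θ^(2*p+2)*Real.cos θ / DD R x θ^(p+2)
  - 4*((p:ℝ)+1)*((p:ℝ)+2)*R^2*x^(2*p+3)*Real.sin θ^(2*p+2)*(1 - Real.cos θ^2) / DD R x θ^(p+3)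

lemma DD_lb {R r x : ℝ} (hr : 0 ≤ r) (hrR : r < R) (hx : |x| ≤ r) (θ : ℝ) :
    (R - r)^2 ≤ DD R x θ := by
  have h1 := Real.neg_one_le_cos θ
  have h2 := Real.cos_le_one θ
  obtain ⟨hxl, hxr⟩ := abs_le.mp hx
  have hR : 0 < R := lt_of_le_of_lt hr hrR
  unfold DD
  rcases le_or_gt 0 x with h | h
  · nlinarith [mul_nonneg (mul_nonneg (mul_nonneg (by norm_num : (0:ℝ) ≤ 2) hR.le) h)
      (by linarith : (0:ℝ) ≤ 1 + Real.cos θ),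
      mul_nonneg (by linarith : (0:ℝ) ≤ r - x) (by linarith : (0:ℝ) ≤ 2*R - x - r)]
  · nlinarith [mul_nonneg (mul_nonneg (mul_nonneg (by norm_num : (0:ℝ) ≤ 2) hR.le) (by linarith : (0:ℝ) ≤ -x))
      (by linarith : (0:ℝ) ≤ 1 - Real.cos θ),
      mul_nonneg (by linarith : (0:ℝ) ≤ x + r) (by linarith : (0:ℝ) ≤ 2*R + x - r)]

lemma DD_pos {R r x : ℝ} (hr : 0 ≤ r) (hrR : r < R) (hx : |x| ≤ r) (θ : ℝ) :
    0 < DD R x θ :=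
  lt_of_lt_of_le (pow_pos (sub_pos.mpr hrR) 2) (DD_lb hr hrR hx θ)

lemma hasDerivAt_DD (R θ x : ℝ) :
    HasDerivAt (fun x => DD R x θ) (2*x + 2*R*Real.cos θ) x := by
  have h1 : HasDerivAt (fun x : ℝ => x^2) (2*x) x := by simpa using hasDerivAt_pow 2 x
  have h2 : HasDerivAt (fun x : ℝ => 2*R*x*Real.cos θ) (2*R*Real.cos θ) x := by
    simpa using ((hasDerivAt_id x).const_mul (2*R)).mul_const (Real.cos θ)
  simpa [DD] using (h1.const_add (R^2)).fun_add h2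

lemma hasDerivAt_FF {R x : ℝ} (p : ℕ) (θ : ℝ) (hD : DD R x θ ≠ 0) :
    HasDerivAt (fun y => FF R p y θ) (FF' R p x θ) x := by
  have hDm : HasDerivAt (fun y => DD R y θ^(p+1))
      ((((p:ℝ)+1)) * DD R x θ^p * (2*x + 2*R*Real.cos θ)) x := by
    simpa using (hasDerivAt_DD R θ x).fun_pow (p+1)
  have := (hasDerivAt_const x (Real.sin θ^(2*p+2))).fun_div hDm (pow_ne_zero _ hD)
  convert this using 1
  · rfl
  · rfl
  · rfl
  unfold FF'
  rw [div_eq_div_iff (pow_ne_zero _ hD) (by positivity)]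
  field_simp
  ring

lemma hasDerivAt_DDθ (R x θ : ℝ) :
    HasDerivAt (fun θ => DD R x θ) (-(2*R*x*Real.sin θ)) θ := by
  have h2 : HasDerivAt (fun θ : ℝ => 2*R*x*Real.cos θ) (2*R*x*(-Real.sin θ)) θ :=
    (Real.hasDerivAt_cos θ).const_mul (2*R*x)
  have := h2.const_add (R^2 + x^2)
  exact this.congr_deriv (by ring)

lemma sin_pow_even (p : ℕ) (θ : ℝ) :
    Real.sin θ^(2*p+2) = (1 - Real.cos θ^2)^(p+1) := by
  rw [show 2*p+2 = 2*(p+1) by ring, pow_mul, Real.sin_sq]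

/-- derivative of `hh` in `x` equals `ψf` (the θ-derivative of `Φf`). -/
lemma hasDerivAt_hh {R x : ℝ} (p : ℕ) (θ : ℝ) (hD : DD R x θ ≠ 0) :
    HasDerivAt (fun y => hh R p y θ) (ψf R p x θ) x := by
  have hq : HasDerivAt (fun y : ℝ => y^(2*p+3) * (2*y+2*R*Real.cos θ))
      ((2*(p:ℝ)+3)*x^(2*p+2)*(2*x+2*R*Real.cos θ) + x^(2*p+3)*2) x := by
    have h1 : HasDerivAt (fun y : ℝ => y^(2*p+3)) ((2*(p:ℝ)+3)*x^(2*p+2)) x := by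
      have := hasDerivAt_pow (2*p+3) x
      exact this.congr_deriv (by push_cast; ring_nf)
    have h2 : HasDerivAt (fun y : ℝ => 2*y+2*R*Real.cos θ) 2 x := by
      simpa using ((hasDerivAt_id x).const_mul (2:ℝ)).add_const (2*R*Real.cos θ)
    simpa using h1.fun_mul h2
  have hDm : HasDerivAt (fun y => DD R y θ^(p+2))
      ((((p:ℝ)+2)) * DD R x θ^(p+1) * (2*x + 2*R*Real.cos θ)) x := by
    simpa using (hasDerivAt_DD R θ x).fun_pow (p+2)
  have hdiv := hq.fun_div hDm (pow_ne_zero _ hD)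
  have hmain := hdiv.const_mul (-((p:ℝ)+1) * Real.sin θ^(2*p+2))
  convert hmain using 1
  · rfl
  · rfl
  · funext y
    unfold hh FF'
    simp only [div_eq_mul_inv]
    ring
  · unfold ψf
    rw [sin_pow_even]
    rw [div_sub_div _ _ (pow_ne_zero (p+2) hD) (pow_ne_zero (p+3) hD)]
    rw [mul_div_assoc']
    rw [div_eq_div_iff (mul_ne_zero (pow_ne_zero _ hD) (pow_ne_zero _ hD))
      (pow_ne_zero 2 (pow_ne_zero _ hD))]
    unfold DD
    ring

lemma hasDerivAt_Φθ {R x : ℝ} (p : ℕ) (θ : ℝ) (hD : DD R x θ ≠ 0) :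
    HasDerivAt (fun θ => Φf R p x θ) (ψf R p x θ) θ := by
  have hs : HasDerivAt (fun θ : ℝ => Real.sin θ^(2*p+3))
      ((2*(p:ℝ)+3) * Real.sin θ^(2*p+2) * Real.cos θ) θ := by
    have := (Real.hasDerivAt_sin θ).pow (2*p+3)
    exact this.congr_deriv (by push_cast; ring_nf)
  have hDm : HasDerivAt (fun θ => DD R x θ^(p+2))
      ((((p:ℝ)+2)) * DD R x θ^(p+1) * (-(2*R*x*Real.sin θ))) θ := by
    simpa using (hasDerivAt_DDθ R x θ).fun_pow (p+2)
  have hdiv := hs.fun_div hDm (pow_ne_zero _ hD)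
  have hmain := hdiv.const_mul (-2*((p:ℝ)+1)*R*x^(2*p+2))
  convert hmain using 1
  · rfl
  · rfl
  · funext t
    unfold Φf
    simp only [div_eq_mul_inv]
    ring
  · unfold ψf
    have h3 : Real.sin θ^(2*p+3) = (1 - Real.cos θ^2)^(p+1) * Real.sin θ := by
      rw [show 2*p+3 = (2*p+2)+1 by ring, pow_succ, sin_pow_even]
    rw [h3, sin_pow_even]
    rw [div_sub_div _ _ (pow_ne_zero (p+2) hD) (pow_ne_zero (p+3) hD)]
    rw [mul_div_assoc']
    rw [div_eq_div_iff (mul_ne_zero (pow_ne_zero _ hD) (pow_ne_zero _ hD))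
      (pow_ne_zero 2 (pow_ne_zero _ hD))]
    have h2 : Real.sin θ^2 = 1 - Real.cos θ^2 := Real.sin_sq θ
    linear_combination (4*((p:ℝ)+1)*((p:ℝ)+2)*R^2*x^(2*p+3)*(1-Real.cos θ^2)^(p+1)*DD R x θ^(p+1)*DD R x θ^(p+2)*DD R x θ^(p+3)) * h2

lemma frac_bound {num D C δ : ℝ} (q : ℕ) (hδ : 0 < δ) (hD : δ^2 ≤ D) (hnum : |num| ≤ C) :
    |num / D^q| ≤ C / δ^(2*q) := by
  have hDpos : 0 < D := lt_of_lt_of_le (pow_pos hδ 2) hD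
  rw [abs_div, abs_of_pos (pow_pos hDpos q)]
  have h1 : δ^(2*q) ≤ D^q := by
    rw [pow_mul]
    exact pow_le_pow_left₀ (sq_nonneg δ) hD q
  exact div_le_div₀ (le_trans (abs_nonneg _) hnum) hnum (pow_pos hδ _) h1

lemma abs_sin_pow_le_one (n : ℕ) (θ : ℝ) : |Real.sin θ^n| ≤ 1 := by
  rw [abs_pow]
  exact pow_le_one₀ (abs_nonneg _) (Real.abs_sin_le_one θ)

lemma abs_lin_le {x r R c : ℝ} (hx : |x| ≤ r) (hc : |c| ≤ 1) (hR : 0 ≤ R) :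
    |2*x+2*R*c| ≤ 2*r+2*R := by
  rw [abs_le] at *
  obtain ⟨h1, h2⟩ := hx; obtain ⟨h3, h4⟩ := hc
  constructor <;> nlinarith [mul_nonneg hR (by linarith : (0:ℝ) ≤ 1 + c),
    mul_nonneg hR (by linarith : (0:ℝ) ≤ 1 - c)]


lemma prod3_bound {A a b CA ra : ℝ} (hA : |A| ≤ CA) (ha : |a| ≤ ra) (hb : |b| ≤ 1) :
    |A*a*b| ≤ CA*ra := by
  rw [abs_mul, abs_mul]
  have h0a := abs_nonneg a
  have h0b := abs_nonneg b
  have h0A := abs_nonneg A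
  have hra : 0 ≤ ra := le_trans h0a ha
  have hCA : 0 ≤ CA := le_trans h0A hA
  calc |A| * |a| * |b| ≤ CA*ra*1 :=
        mul_le_mul (mul_le_mul hA ha h0a hCA) hb h0b (by positivity)
    _ = CA*ra := by ring

lemma prod4_bound {A a b c CA ra : ℝ} (hA : |A| ≤ CA) (ha : |a| ≤ ra) (hb : |b| ≤ 1)
    (hc : |c| ≤ 1) : |A*a*b*c| ≤ CA*ra := by
  rw [abs_mul]
  have h := prod3_bound hA ha hb
  have h0c := abs_nonneg c
  have h0 := abs_nonneg (A*a*b)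
  calc |A*a*b| * |c| ≤ (CA*ra)*1 :=
        mul_le_mul h hc h0c (le_trans h0 h)
    _ = CA*ra := by ring

lemma FF'_bound (p : ℕ) {R r x : ℝ} (hr : 0 ≤ r) (hrR : r < R) (hx : |x| ≤ r) (θ : ℝ) :
    ‖FF' R p x θ‖ ≤ ((p:ℝ)+1)*(2*r+2*R) / (R-r)^(2*(p+2)) := by
  have hR : 0 < R := lt_of_le_of_lt hr hrR
  rw [Real.norm_eq_abs]
  unfold FF'
  refine frac_bound (p+2) (sub_pos.mpr hrR) (DD_lb hr hrR hx θ) ?_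
  refine prod3_bound ?_ (abs_lin_le hx (Real.abs_cos_le_one θ) hR.le) (abs_sin_pow_le_one _ _)
  rw [abs_neg, abs_of_pos (by positivity)]

lemma ψf_bound (p : ℕ) {R r x : ℝ} (hr : 0 ≤ r) (hrR : r < R) (hx : |x| ≤ r) (θ : ℝ) :
    ‖ψf R p x θ‖ ≤ 2*((p:ℝ)+1)*(2*(p:ℝ)+3)*R*r^(2*p+2) / (R-r)^(2*(p+2))
      + 4*((p:ℝ)+1)*((p:ℝ)+2)*R^2*r^(2*p+3) / (R-r)^(2*(p+3)) := by
  have hR : 0 < R := lt_of_le_of_lt hr hrR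
  rw [Real.norm_eq_abs]
  unfold ψf
  refine le_trans (abs_sub _ _) (add_le_add ?_ ?_)
  · refine frac_bound (p+2) (sub_pos.mpr hrR) (DD_lb hr hrR hx θ) ?_
    have hxp : |x^(2*p+2)| ≤ r^(2*p+2) := by
      rw [abs_pow]; exact pow_le_pow_left₀ (abs_nonneg _) hx _
    have hA : |(-2*((p:ℝ)+1)*(2*(p:ℝ)+3)*R)| ≤ 2*((p:ℝ)+1)*(2*(p:ℝ)+3)*R := by
      rw [show (-2*((p:ℝ)+1)*(2*(p:ℝ)+3)*R) = -(2*((p:ℝ)+1)*(2*(p:ℝ)+3)*R) by ring, abs_neg]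
      exact le_of_eq (abs_of_pos (mul_pos (by positivity) hR))
    exact prod4_bound hA hxp (abs_sin_pow_le_one _ _) (Real.abs_cos_le_one θ)
  · refine frac_bound (p+3) (sub_pos.mpr hrR) (DD_lb hr hrR hx θ) ?_
    have hxp : |x^(2*p+3)| ≤ r^(2*p+3) := by
      rw [abs_pow]; exact pow_le_pow_left₀ (abs_nonneg _) hx _
    have hA : |(4*((p:ℝ)+1)*((p:ℝ)+2)*R^2)| ≤ 4*((p:ℝ)+1)*((p:ℝ)+2)*R^2 := by
      exact le_of_eq (abs_of_pos (mul_pos (by positivity) (pow_pos hR 2)))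
    have hcos : |1 - Real.cos θ^2| ≤ 1 := by
      rw [abs_le]
      have h1 : Real.cos θ^2 ≤ 1 := Real.cos_sq_le_one θ
      have h2 : (0:ℝ) ≤ Real.cos θ^2 := sq_nonneg _
      constructor <;> linarith
    exact prod4_bound hA hxp (abs_sin_pow_le_one _ _) hcos

lemma cont_DDθ (R x : ℝ) : Continuous (fun θ => DD R x θ) := by
  unfold DD; fun_prop

lemma cont_FFθ (R : ℝ) (p : ℕ) (x : ℝ) (hne : ∀ θ, DD R x θ ≠ 0) :
    Continuous (fun θ => FF R p x θ) := by
  unfold FF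
  exact (Real.continuous_sin.pow _).div ((cont_DDθ R x).pow _)
    (fun θ => pow_ne_zero _ (hne θ))

lemma cont_FF'θ (R : ℝ) (p : ℕ) (x : ℝ) (hne : ∀ θ, DD R x θ ≠ 0) :
    Continuous (fun θ => FF' R p x θ) := by
  unfold FF'
  exact ((continuous_const.mul (continuous_const.add (continuous_const.mul Real.continuous_cos))).mul
    (Real.continuous_sin.pow _)).div ((cont_DDθ R x).pow _) (fun θ => pow_ne_zero _ (hne θ))

lemma cont_ψθ (R : ℝ) (p : ℕ) (x : ℝ) (hne : ∀ θ, DD R x θ ≠ 0) :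
    Continuous (fun θ => ψf R p x θ) := by
  unfold ψf
  apply Continuous.sub
  · exact (((continuous_const.mul (Real.continuous_sin.pow _)).mul Real.continuous_cos)).div
      ((cont_DDθ R x).pow _) (fun θ => pow_ne_zero _ (hne θ))
  · exact ((continuous_const.mul (Real.continuous_sin.pow _)).mul
      (continuous_const.sub (Real.continuous_cos.pow _))).div
      ((cont_DDθ R x).pow _) (fun θ => pow_ne_zero _ (hne θ))

lemma hasDerivAt_G (p : ℕ) {R x : ℝ} (hR : 0 < R) (hx : |x| < R) :
    HasDerivAt (fun y => ∫ θ in (0:ℝ)..π, FF R p y θ)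
      (∫ θ in (0:ℝ)..π, FF' R p x θ) x := by
  set r := (|x| + R)/2 with hr
  have hr0 : 0 ≤ r := by positivity
  have hrR : r < R := by rw [hr]; linarith
  have hxr : |x| < r := by rw [hr]; linarith
  set ε := r - |x| with hε
  have hεpos : 0 < ε := by rw [hε]; linarith
  have hball : ∀ y ∈ ball x ε, |y| ≤ r := by
    intro y hy
    have h1 : |y - x| < ε := by simpa [Real.dist_eq] using hy
    have h2 := abs_sub_abs_le_abs_sub y x
    rw [hε] at h1; linarith
  have hne : ∀ y, |y| ≤ r → ∀ θ, DD R y θ ≠ 0 := fun y hy θ => (DD_pos hr0 hrR hy θ).ne'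
  refine (intervalIntegral.hasDerivAt_integral_of_dominated_loc_of_deriv_le
    (F := fun y θ => FF R p y θ) (F' := fun y θ => FF' R p y θ)
    (bound := fun _ => ((p:ℝ)+1)*(2*r+2*R) / (R-r)^(2*(p+2)))
    (ball_mem_nhds x hεpos) ?_ ?_ ?_ ?_ ?_ ?_).2
  · filter_upwards [ball_mem_nhds x hεpos] with y hy
    exact (cont_FFθ R p y (hne y (hball y hy))).aestronglyMeasurable
  · exact (cont_FFθ R p x (hne x hxr.le)).intervalIntegrable _ _
  · exact (cont_FF'θ R p x (hne x hxr.le)).aestronglyMeasurable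
  · exact ae_of_all _ (fun θ _ y hy => FF'_bound p hr0 hrR (hball y hy) θ)
  · exact intervalIntegrable_const
  · exact ae_of_all _ (fun θ _ y hy => hasDerivAt_FF p θ (hne y (hball y hy) θ))

lemma hasDerivAt_J (p : ℕ) {R x : ℝ} (hR : 0 < R) (hx : |x| < R) :
    HasDerivAt (fun y => ∫ θ in (0:ℝ)..π, hh R p y θ)
      (∫ θ in (0:ℝ)..π, ψf R p x θ) x := by
  set r := (|x| + R)/2 with hr
  have hr0 : 0 ≤ r := by positivity
  have hrR : r < R := by rw [hr]; linarith
  have hxr : |x| < r := by rw [hr]; linarith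
  set ε := r - |x| with hε
  have hεpos : 0 < ε := by rw [hε]; linarith
  have hball : ∀ y ∈ ball x ε, |y| ≤ r := by
    intro y hy
    have h1 : |y - x| < ε := by simpa [Real.dist_eq] using hy
    have h2 := abs_sub_abs_le_abs_sub y x
    rw [hε] at h1; linarith
  have hne : ∀ y, |y| ≤ r → ∀ θ, DD R y θ ≠ 0 := fun y hy θ => (DD_pos hr0 hrR hy θ).ne'
  refine (intervalIntegral.hasDerivAt_integral_of_dominated_loc_of_deriv_le
    (F := fun y θ => hh R p y θ) (F' := fun y θ => ψf R p y θ)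
    (bound := fun _ => 2*((p:ℝ)+1)*(2*(p:ℝ)+3)*R*r^(2*p+2) / (R-r)^(2*(p+2))
      + 4*((p:ℝ)+1)*((p:ℝ)+2)*R^2*r^(2*p+3) / (R-r)^(2*(p+3)))
    (ball_mem_nhds x hεpos) ?_ ?_ ?_ ?_ ?_ ?_).2
  · filter_upwards [ball_mem_nhds x hεpos] with y hy
    exact ((continuous_const.mul (cont_FF'θ R p y (hne y (hball y hy)))).aestronglyMeasurable)
  · exact (continuous_const.mul (cont_FF'θ R p x (hne x hxr.le))).intervalIntegrable _ _
  · exact (cont_ψθ R p x (hne x hxr.le)).aestronglyMeasurable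
  · exact ae_of_all _ (fun θ _ y hy => ψf_bound p hr0 hrR (hball y hy) θ)
  · exact intervalIntegrable_const
  · exact ae_of_all _ (fun θ _ y hy => hasDerivAt_hh p θ (hne y (hball y hy) θ))

lemma int_ψ_zero (p : ℕ) {R x : ℝ} (hR : 0 < R) (hx : |x| < R) :
    (∫ θ in (0:ℝ)..π, ψf R p x θ) = 0 := by
  have hne : ∀ θ, DD R x θ ≠ 0 := fun θ => (DD_pos (abs_nonneg x) hx (le_refl _) θ).ne'
  rw [intervalIntegral.integral_eq_sub_of_hasDerivAt
    (f := fun θ => Φf R p x θ) (fun θ _ => hasDerivAt_Φθ p θ (hne θ))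
    ((cont_ψθ R p x hne).intervalIntegrable _ _)]
  unfold Φf
  rw [Real.sin_pi, Real.sin_zero, zero_pow (by omega : 2*p+3 ≠ 0)]
  simp

lemma J_eq_zero (p : ℕ) {R y : ℝ} (hR : 0 < R) (hy0 : 0 < y) (hyR : y < R) :
    (∫ θ in (0:ℝ)..π, hh R p y θ) = 0 := by
  set J := fun z : ℝ => ∫ θ in (0:ℝ)..π, hh R p z θ with hJdef
  have hderiv : ∀ z : ℝ, |z| < R → HasDerivAt J 0 z := by
    intro z hz
    have h := hasDerivAt_J p hR hz
    rwa [int_ψ_zero p hR hz] at h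
  have habs : ∀ z ∈ Ioc 0 y, |z| < R := by
    intro z hz
    rw [abs_of_pos hz.1]
    linarith [hz.2]
  have hconst : ∀ z ∈ Ioc 0 y, J y = J z := by
    intro z hz
    have h := constant_of_has_deriv_right_zero (f := J) (a := z) (b := y)
      (fun w hw => (hderiv w (by
        rw [abs_of_pos (lt_of_lt_of_le hz.1 hw.1)]
        linarith [hw.2])).continuousAt.continuousWithinAt)
      (fun w hw => (hderiv w (by
        rw [abs_of_pos (lt_of_lt_of_le hz.1 hw.1)]
        linarith [hw.2.le])).hasDerivWithinAt)
    exact h y ⟨hz.2, le_refl y⟩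
  set C : ℝ := ((p:ℝ)+1)*(2*y+2*R) / (R-y)^(2*(p+2)) * |π| with hCdef
  have hbound : ∀ z ∈ Ioc 0 y, |J y| ≤ C * z^(2*p+3) := by
    intro z hz
    rw [hconst z hz]
    have hz' : |z| ≤ y := by rw [abs_of_pos hz.1]; exact hz.2
    have hJz : J z = z^(2*p+3) * ∫ θ in (0:ℝ)..π, FF' R p z θ := by
      rw [hJdef]
      simp only [hh]
      exact intervalIntegral.integral_const_mul _ _
    rw [hJz, abs_mul, abs_pow, abs_of_pos hz.1]
    rw [mul_comm C (z^(2*p+3))]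
    apply mul_le_mul_of_nonneg_left _ (pow_nonneg hz.1.le _)
    have hnorm := intervalIntegral.norm_integral_le_of_norm_le_const
      (C := ((p:ℝ)+1)*(2*y+2*R) / (R-y)^(2*(p+2)))
      (f := fun θ => FF' R p z θ) (a := 0) (b := π)
      (fun θ _ => FF'_bound p hy0.le hyR hz' θ)
    rw [Real.norm_eq_abs] at hnorm
    calc |∫ θ in (0:ℝ)..π, FF' R p z θ| ≤ ((p:ℝ)+1)*(2*y+2*R) / (R-y)^(2*(p+2)) * |π - 0| := hnorm
      _ = C := by rw [hCdef]; norm_num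
  have htend : Tendsto (fun z : ℝ => C * z^(2*p+3)) (𝓝[>] (0:ℝ)) (𝓝 0) := by
    have h1 : Tendsto (fun z : ℝ => C * z^(2*p+3)) (𝓝 (0:ℝ)) (𝓝 (C * 0^(2*p+3))) :=
      (continuous_const.mul (continuous_pow _)).tendsto 0
    rw [zero_pow (by omega : 2*p+3 ≠ 0), mul_zero] at h1
    exact h1.mono_left nhdsWithin_le_nhds
  have hev : ∀ᶠ z in 𝓝[>] (0:ℝ), |J y| ≤ C * z^(2*p+3) := by
    filter_upwards [Ioc_mem_nhdsGT hy0] with z hz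
    exact hbound z hz
  have hle : |J y| ≤ 0 := ge_of_tendsto htend hev
  have := abs_nonneg (J y)
  have : |J y| = 0 := le_antisymm hle this
  exact abs_eq_zero.mp this

lemma G1_zero (p : ℕ) {R : ℝ} (hR : 0 < R) :
    (∫ θ in (0:ℝ)..π, FF' R p 0 θ) = 0 := by
  have hRR : (R^2+0^2+2*R*0*1)^(p+2) ≠ 0 := by
    have : R^2+0^2+2*R*0*1 = R^2 := by ring
    rw [this]
    positivity
  have heq : ∀ θ, FF' R p 0 θ =
      (-((p:ℝ)+1)*2*R/(R^2)^(p+2)) * (Real.sin θ^(2*p+2) * Real.cos θ^(2*0+1)) := by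
    intro θ
    unfold FF' DD
    rw [show R^2+0^2+2*R*0*Real.cos θ = R^2 by ring]
    have : (R^2)^(p+2) ≠ 0 := by positivity
    field_simp
    ring
  rw [intervalIntegral.integral_congr (g := fun θ =>
      (-((p:ℝ)+1)*2*R/(R^2)^(p+2)) * (Real.sin θ^(2*p+2) * Real.cos θ^(2*0+1)))
      (fun θ _ => heq θ)]
  rw [intervalIntegral.integral_const_mul, integral_sin_pow_mul_cos_pow_odd]
  rw [Real.sin_zero, Real.sin_pi]
  simp

lemma intFF'_zero (p : ℕ) {R w : ℝ} (hR : 0 < R) (hw0 : 0 ≤ w) (hwR : w < R) :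
    (∫ θ in (0:ℝ)..π, FF' R p w θ) = 0 := by
  rcases eq_or_lt_of_le hw0 with h | h
  · rw [← h]; exact G1_zero p hR
  · have hJ : (∫ θ in (0:ℝ)..π, hh R p w θ) = 0 := J_eq_zero p hR h hwR
    have hJ2 : (∫ θ in (0:ℝ)..π, hh R p w θ)
        = w^(2*p+3) * ∫ θ in (0:ℝ)..π, FF' R p w θ := by
      simp only [hh]
      exact intervalIntegral.integral_const_mul _ _
    rw [hJ2] at hJ
    have hw : w^(2*p+3) ≠ 0 := pow_ne_zero _ h.ne'
    exact (mul_eq_zero.mp hJ).resolve_left hw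

lemma G_const (p : ℕ) {R x : ℝ} (hR : 0 < R) (hx0 : 0 ≤ x) (hxR : x < R) :
    (∫ θ in (0:ℝ)..π, FF R p x θ) = ∫ θ in (0:ℝ)..π, FF R p 0 θ := by
  have h := constant_of_has_deriv_right_zero
    (f := fun y => ∫ θ in (0:ℝ)..π, FF R p y θ) (a := 0) (b := x)
    (fun w hw => by
      have hwR : |w| < R := by
        rw [abs_of_nonneg hw.1]; exact lt_of_le_of_lt hw.2 hxR
      exact (hasDerivAt_G p hR hwR).continuousAt.continuousWithinAt)
    (fun w hw => by
      have hwR : |w| < R := by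
        rw [abs_of_nonneg hw.1]; exact lt_trans hw.2 hxR
      have hG := hasDerivAt_G p hR hwR
      rw [intFF'_zero p hR hw.1 (lt_trans hw.2 hxR)] at hG
      exact hG.hasDerivWithinAt)
  exact h x ⟨hx0, le_refl x⟩

lemma G_zero (p : ℕ) {R : ℝ} (hR : 0 < R) :
    (∫ θ in (0:ℝ)..π, FF R p 0 θ)
      = (∫ θ in (0:ℝ)..π, Real.sin θ^(2*(p+1))) / R^(2*(p+1)) := by
  rw [← intervalIntegral.integral_div]
  apply intervalIntegral.integral_congr
  intro θ _
  unfold FF DD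
  rw [show R^2+0^2+2*R*0*Real.cos θ = R^2 by ring, ← pow_mul,
    show 2*(p+1) = 2*p+2 by ring]

lemma subst_lemma (p : ℕ) {R x : ℝ} (hR : 0 < R) (hx0 : 0 ≤ x) (hxR : x < R) :
    (∫ s in (-1:ℝ)..1, (1 - s^2) ^ ((2*(p:ℝ)+1)/2) / (R^2 + x^2 + 2*R*x*s) ^ (p+1))
      = ∫ θ in (0:ℝ)..π, FF R p x θ := by
  set g : ℝ → ℝ := fun s => (1 - s^2) ^ ((2*(p:ℝ)+1)/2) / (R^2 + x^2 + 2*R*x*s) ^ (p+1)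
    with hg
  have hq : (0:ℝ) < (2*(p:ℝ)+1)/2 := by positivity
  have hDne : ∀ s ∈ Icc (-1:ℝ) 1, (R^2 + x^2 + 2*R*x*s) ≠ 0 := by
    intro s hs
    have h1 : (R-x)^2 ≤ R^2 + x^2 + 2*R*x*s := by
      nlinarith [mul_nonneg (mul_nonneg (mul_nonneg (by norm_num : (0:ℝ) ≤ 2) hR.le) hx0)
        (by linarith [hs.1] : (0:ℝ) ≤ 1 + s)]
    have h2 : (0:ℝ) < (R-x)^2 := pow_pos (sub_pos.mpr hxR) 2
    linarith
  have hcont : ContinuousOn g (Icc (-1:ℝ) 1) := by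
    apply ContinuousOn.div
    · exact (Continuous.rpow_const (by fun_prop) (fun s => Or.inr hq.le)).continuousOn
    · exact (Continuous.pow (by fun_prop) _).continuousOn
    · exact fun s hs => pow_ne_zero _ (hDne s hs)
  have himg : Real.cos '' (Set.uIcc π 0) ⊆ Icc (-1:ℝ) 1 := by
    intro u hu
    obtain ⟨θ, _, rfl⟩ := hu
    exact ⟨Real.neg_one_le_cos θ, Real.cos_le_one θ⟩
  have hmin : min π 0 = 0 := min_eq_right Real.pi_pos.le
  have hmax : max π 0 = π := max_eq_left Real.pi_pos.le
  have hsub := intervalIntegral.integral_comp_smul_deriv''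
    (f := Real.cos) (f' := fun θ => -Real.sin θ) (g := g) (a := π) (b := 0)
    (Real.continuous_cos.continuousOn)
    (by
      intro θ _
      exact (Real.hasDerivAt_cos θ).hasDerivWithinAt)
    ((Real.continuous_sin.neg).continuousOn)
    (hcont.mono himg)
  rw [Real.cos_pi, Real.cos_zero] at hsub
  rw [← hsub]
  rw [intervalIntegral.integral_symm 0 π]
  rw [← intervalIntegral.integral_neg]
  apply intervalIntegral.integral_congr
  intro θ hθ
  rw [Set.uIcc_of_le Real.pi_pos.le] at hθ
  have hsin : 0 ≤ Real.sin θ := Real.sin_nonneg_of_nonneg_of_le_pi hθ.1 hθ.2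
  simp only [smul_eq_mul, Function.comp]
  have hpow : ((1:ℝ) - Real.cos θ^2) ^ ((2*(p:ℝ)+1)/2) = Real.sin θ^(2*p+1) := by
    rw [show (1:ℝ) - Real.cos θ^2 = Real.sin θ^2 by
      have := Real.sin_sq_add_cos_sq θ; linarith]
    rw [← sq_abs, abs_of_nonneg hsin]
    rw [← Real.rpow_natCast (Real.sin θ) 2, ← Real.rpow_mul hsin]
    rw [show ((2:ℕ):ℝ) * ((2*(p:ℝ)+1)/2) = ((2*p+1 : ℕ) : ℝ) by push_cast; ring]
    exact Real.rpow_natCast _ _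
  show -(-Real.sin θ * g (Real.cos θ)) = FF R p x θ
  rw [hg]
  simp only []
  unfold FF DD
  rw [hpow]
  rw [neg_mul, neg_neg]
  rw [show 2*p+2 = (2*p+1)+1 by ring, pow_succ]
  ring

end Stmt3Aux

open Stmt3Aux in
theorem stmt_3 (k : ℕ) (hk : 2 ≤ k) (R x : ℝ) (hR : 0 < R) (hx : 0 ≤ x) (hxR : x < R) :
    (∫ s in (-1:ℝ)..1, (1 - s^2) ^ ((2*(k:ℝ) - 3)/2) / (R^2 + x^2 + 2*R*x*s) ^ (k - 1)) =
      Real.sqrt π * Real.Gamma ((k:ℝ) - 1/2) / Real.Gamma k / R ^ (2*(k - 1)) := by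
  obtain ⟨p, rfl⟩ : ∃ p, k = p + 2 := ⟨k - 2, by omega⟩
  have hk1 : p + 2 - 1 = p + 1 := by omega
  rw [hk1]
  have hexp : (2*((p+2:ℕ):ℝ) - 3)/2 = (2*(p:ℝ)+1)/2 := by push_cast; ring
  rw [hexp]
  rw [subst_lemma p hR hx hxR, G_const p hR hx hxR, G_zero p hR,
    sin_sq_int (p+1)]
  have hΓ1 : ((p+2:ℕ):ℝ) - 1/2 = ((p+1:ℕ):ℝ) + 1/2 := by push_cast; ring
  have hΓ2 : ((p+2:ℕ):ℝ) = ((p+1:ℕ):ℝ) + 1 := by push_cast; ring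
  rw [hΓ1, hΓ2]
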